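/- Fix n ≥ 1, points c₁, …, c_N ∈ ℝⁿ, and radii r₁, …, r_N ∈ (0,1); set h_i = √(1 − r_i²). Regard ℝ^{n+i−1} as the subspace of ℝ^{n+i} spanned by the first n+i−1 coordinates, let e_i be the (n+i)-th standard basis vector, and define the affine maps T_i : ℝ^{n+i−1} → ℝ^{n+i}, z ↦ z − c_i + h_i e_i, and S_i : ℝ^{n+i} → ℝ^{n+i}, z ↦ z − (1 + h_i^{−1})⟨e_i, z⟩ e_i + c_i + e_i. Let ρ_i be Step-ReLU on ℝ^{n+i} and recursively define G_i : ℝⁿ → ℝ^{n+i} by G₀ = id and G_i = S_i ∘ ρ_i ∘ T_i ∘ G_{i−1}. Then for all i = 0, 1, …, N and all x ∈ ℝⁿ: G_i(x) = x if x ∉ ⋃_{j=1}^{i} B_{r_j}(c_j), and G_i(x) = c_j + e_j where j ≤ i is the smallest index with x ∈ B_{r_j}(c_j). -/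

import Mathlib

open scoped Classical
open Metric Set

noncomputable section

abbrev Euc (n : ℕ) := EuclideanSpace ℝ (Fin n)

/-- The standard inclusion ℝᵏ ↪ ℝˡ into the first k coordinates. -/
def incl (k l : ℕ) (v : Euc k) : Euc l :=
  WithLp.toLp 2 (fun j => if h : (j : ℕ) < k then v ⟨j, h⟩ else 0)

/-- Step-ReLU on ℝⁿ: v ↦ v if ‖v‖ ≥ 1, and v ↦ 0 if ‖v‖ < 1. -/
def stepReLU {n : ℕ} (v : Euc n) : Euc n := if 1 ≤ ‖v‖ then v else 0

/-- The affine map T : ℝ^{n+i} → ℝ^{n+i+1}, z ↦ z − c + h·e, where e is the last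
standard basis vector of ℝ^{n+i+1} and c ∈ ℝⁿ is regarded inside ℝ^{n+i+1}. -/
def Tmap (n : ℕ) (c : Euc n) (h : ℝ) (i : ℕ) (z : Euc (n + i)) : Euc (n + i + 1) :=
  incl (n + i) (n + i + 1) z - incl n (n + i + 1) c
    + h • EuclideanSpace.single (Fin.last (n + i)) (1 : ℝ)

/-- The affine map S : ℝ^{n+i+1} → ℝ^{n+i+1},
z ↦ z − (1 + h⁻¹)⟨e, z⟩ e + c + e, where e is the last standard basis vector. -/
def Smap (n : ℕ) (c : Euc n) (h : ℝ) (i : ℕ) (z : Euc (n + i + 1)) : Euc (n + i + 1) :=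
  z - ((1 + h⁻¹) * z (Fin.last (n + i))) • EuclideanSpace.single (Fin.last (n + i)) (1 : ℝ)
    + incl n (n + i + 1) c + EuclideanSpace.single (Fin.last (n + i)) (1 : ℝ)

/-- The recursively defined maps Gᵢ : ℝⁿ → ℝ^{n+i}: G₀ = id and
G_{i+1} = Sᵢ ∘ ρ ∘ Tᵢ ∘ Gᵢ, where ρ is Step-ReLU and hᵢ = √(1 − rᵢ²). -/
def Gmap (n : ℕ) (c : ℕ → Euc n) (r : ℕ → ℝ) : (i : ℕ) → Euc n → Euc (n + i)
  | 0 => fun x => x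
  | (i+1) => fun x =>
      Smap n (c i) (Real.sqrt (1 - r i ^ 2)) i
        (stepReLU (Tmap n (c i) (Real.sqrt (1 - r i ^ 2)) i (Gmap n c r i x)))

lemma incl_self (k : ℕ) (v : Euc k) : incl k k v = v := by
  ext j; simp [incl, PiLp.toLp_apply]

lemma incl_incl (k m l : ℕ) (hkm : k ≤ m) (v : Euc k) :
    incl m l (incl k m v) = incl k l v := by
  ext j
  simp only [incl, PiLp.toLp_apply]
  split_ifs with h1 h2 h2 <;> first | rfl | (exact absurd (lt_of_lt_of_le h2 hkm) h1)

lemma incl_add (k l : ℕ) (v w : Euc k) : incl k l (v + w) = incl k l v + incl k l w := by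
  ext j
  simp only [incl, PiLp.toLp_apply, PiLp.add_apply]
  split <;> simp

lemma incl_sub (k l : ℕ) (v w : Euc k) : incl k l (v - w) = incl k l v - incl k l w := by
  ext j
  simp only [incl, PiLp.toLp_apply, PiLp.sub_apply]
  split <;> simp

lemma incl_single (k l : ℕ) (h : k ≤ l) (p : Fin k) (a : ℝ) :
    incl k l (EuclideanSpace.single p a)
      = EuclideanSpace.single (⟨(p:ℕ), lt_of_lt_of_le p.2 h⟩ : Fin l) a := by
  ext j
  simp only [incl, PiLp.toLp_apply, EuclideanSpace.single_apply]
  by_cases h1 : (j:ℕ) < k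
  · rw [dif_pos h1]
    by_cases h2 : (j:ℕ) = (p:ℕ) <;> simp [Fin.ext_iff, h2]
  · rw [dif_neg h1]
    have h2 : ¬((j:ℕ) = (p:ℕ)) := fun hh => h1 (hh ▸ p.2)
    simp [Fin.ext_iff, h2]

lemma norm_incl (k l : ℕ) (hkl : k ≤ l) (v : Euc k) : ‖incl k l v‖ = ‖v‖ := by
  rw [EuclideanSpace.norm_eq, EuclideanSpace.norm_eq]
  congr 1
  set g : ℕ → ℝ := fun m => if h : m < k then ‖v ⟨m, h⟩‖ ^ 2 else 0 with hg
  calc ∑ j : Fin l, ‖incl k l v j‖ ^ 2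
      = ∑ j : Fin l, g (j:ℕ) := by
        refine Finset.sum_congr rfl (fun j _ => ?_)
        simp only [incl, PiLp.toLp_apply, hg]
        split_ifs <;> simp
    _ = ∑ m ∈ Finset.range l, g m := Fin.sum_univ_eq_sum_range g l
    _ = ∑ m ∈ Finset.range k, g m :=
        (Finset.sum_subset (Finset.range_subset_range.2 hkl)
          (fun m _ hm => dif_neg (by simpa using hm))).symm
    _ = ∑ j : Fin k, g (j:ℕ) := (Fin.sum_univ_eq_sum_range g k).symm
    _ = ∑ i : Fin k, ‖v i‖ ^ 2 := Finset.sum_congr rfl (fun j _ => by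
        simp only [hg]; rw [dif_pos j.2])

lemma norm_pyth (m : ℕ) (u : Euc m) (a : ℝ) :
    ‖incl m (m+1) u + a • EuclideanSpace.single (Fin.last m) (1:ℝ)‖
      = Real.sqrt (‖u‖^2 + a^2) := by
  rw [EuclideanSpace.norm_eq]
  congr 1
  rw [Fin.sum_univ_castSucc]
  have hlast : (incl m (m+1) u + a • EuclideanSpace.single (Fin.last m) (1:ℝ)) (Fin.last m) = a := by
    simp only [PiLp.add_apply, PiLp.smul_apply, EuclideanSpace.single_apply, incl, PiLp.toLp_apply]
    rw [dif_neg (by simp)]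
    simp
  have hcast : ∀ j : Fin m,
      (incl m (m+1) u + a • EuclideanSpace.single (Fin.last m) (1:ℝ)) j.castSucc = u j := by
    intro j
    simp only [PiLp.add_apply, PiLp.smul_apply, EuclideanSpace.single_apply, incl, PiLp.toLp_apply]
    rw [dif_pos (by simpa using j.2), if_neg (Fin.castSucc_lt_last j).ne]
    simp [Fin.eta]
  rw [hlast]
  rw [Finset.sum_congr rfl (fun j _ => by rw [hcast j])]
  have huu : ‖u‖^2 = ∑ j : Fin m, ‖u j‖^2 := by
    rw [EuclideanSpace.norm_eq, Real.sq_sqrt (Finset.sum_nonneg fun _ _ => sq_nonneg _)]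
  rw [huu]
  simp [sq_abs]

lemma coord_le_norm {m : ℕ} (v : Euc m) (p : Fin m) : |v p| ≤ ‖v‖ := by
  rw [EuclideanSpace.norm_eq]
  have h1 : |v p| = Real.sqrt (‖v p‖^2) := by
    rw [Real.sqrt_sq_eq_abs]; simp
  rw [h1]
  exact Real.sqrt_le_sqrt (Finset.single_le_sum (fun j _ => sq_nonneg ‖v j‖) (Finset.mem_univ p))

lemma incl_last (n i : ℕ) (c : Euc n) : incl n (n + i + 1) c (Fin.last (n + i)) = 0 := by
  simp only [incl, PiLp.toLp_apply]
  rw [dif_neg (by simp)]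

lemma Tmap_last (n : ℕ) (c : Euc n) (h : ℝ) (i : ℕ) (z : Euc (n + i)) :
    Tmap n c h i z (Fin.last (n + i)) = h := by
  simp only [Tmap, PiLp.add_apply, PiLp.sub_apply, PiLp.smul_apply,
    EuclideanSpace.single_apply, incl, PiLp.toLp_apply]
  rw [dif_neg (by simp), dif_neg (by simp)]
  simp

lemma Smap_Tmap (n : ℕ) (c : Euc n) (h : ℝ) (hh : h ≠ 0) (i : ℕ) (z : Euc (n + i)) :
    Smap n c h i (Tmap n c h i z) = incl (n + i) (n + i + 1) z := by
  ext j
  simp only [Smap, PiLp.add_apply, PiLp.sub_apply, PiLp.smul_apply]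
  rw [Tmap_last]
  by_cases hj : j = Fin.last (n + i)
  · subst hj
    rw [Tmap_last, incl_last]
    simp only [EuclideanSpace.single_apply, if_pos rfl]
    have : (incl (n + i) (n + i + 1) z) (Fin.last (n + i)) = 0 := by
      simp only [incl, PiLp.toLp_apply]; rw [dif_neg (by simp)]
    rw [this]
    field_simp
    simp only [if_pos trivial, smul_eq_mul]
    ring
  · simp only [Tmap, PiLp.add_apply, PiLp.sub_apply, PiLp.smul_apply,
      EuclideanSpace.single_apply, if_neg hj]
    simp

lemma Smap_zero (n : ℕ) (c : Euc n) (h : ℝ) (i : ℕ) :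
    Smap n c h i 0 = incl n (n + i + 1) c
      + EuclideanSpace.single (Fin.last (n + i)) (1 : ℝ) := by
  ext j
  simp [Smap]

lemma norm_Tmap (n : ℕ) (c : Euc n) (h : ℝ) (i : ℕ) (z : Euc (n + i)) :
    ‖Tmap n c h i z‖ = Real.sqrt (‖z - incl n (n + i) c‖^2 + h^2) := by
  have : Tmap n c h i z
      = incl (n + i) (n + i + 1) (z - incl n (n + i) c)
        + h • EuclideanSpace.single (Fin.last (n + i)) (1:ℝ) := by
    rw [incl_sub, incl_incl n (n + i) (n + i + 1) (Nat.le_add_right n i)]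
    rfl
  rw [this, norm_pyth]

/-- For all i ≤ N and x ∈ ℝⁿ: if x lies in none of the balls
B_{rⱼ}(cⱼ) with j < i then Gᵢ(x) = x (under the inclusion ℝⁿ ↪ ℝ^{n+i}); and if j < i
is the smallest index with x ∈ B_{rⱼ}(cⱼ) then Gᵢ(x) = cⱼ + eⱼ, where eⱼ is the
(n+j+1)-st standard basis vector.  (Indices start at 0.) -/
theorem Gmap_eq (n N : ℕ) (hn : 1 ≤ n)
    (c : ℕ → Euc n) (r : ℕ → ℝ) (hr : ∀ j < N, r j ∈ Set.Ioo (0:ℝ) 1) :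
    ∀ i ≤ N, ∀ x : Euc n,
      ((∀ j < i, x ∉ Metric.ball (c j) (r j)) → Gmap n c r i x = incl n (n + i) x) ∧
      (∀ j, ∀ hji : j < i, x ∈ Metric.ball (c j) (r j) →
        (∀ k < j, x ∉ Metric.ball (c k) (r k)) →
        Gmap n c r i x
          = incl n (n + i) (c j)
            + EuclideanSpace.single (⟨n + j, Nat.add_lt_add_left hji n⟩ : Fin (n + i)) (1 : ℝ)) := by
  intro i
  induction i with
  | zero =>
    intro _ x
    refine ⟨fun _ => (incl_self n x).symm, fun j hj => absurd hj (Nat.not_lt_zero j)⟩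
  | succ i ih =>
    intro hiN x
    have hiN' : i ≤ N := Nat.le_of_succ_le hiN
    have hri : r i ∈ Set.Ioo (0:ℝ) 1 := hr i (Nat.lt_of_succ_le hiN)
    set h : ℝ := Real.sqrt (1 - r i ^ 2) with hdef
    have hr2 : (0:ℝ) < 1 - r i ^ 2 := by nlinarith [hri.1, hri.2]
    have hpos : 0 < h := Real.sqrt_pos.2 hr2
    have hsq : h ^ 2 = 1 - r i ^ 2 := Real.sq_sqrt hr2.le
    have hG : Gmap n c r (i+1) x
        = Smap n (c i) h i (stepReLU (Tmap n (c i) h i (Gmap n c r i x))) := rfl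
    by_cases hx : ∀ j < i, x ∉ Metric.ball (c j) (r j)
    · have hGi : Gmap n c r i x = incl n (n+i) x := (ih hiN' x).1 hx
      by_cases hxi : x ∈ Metric.ball (c i) (r i)
      · have hnorm : ‖Tmap n (c i) h i (Gmap n c r i x)‖ < 1 := by
          rw [hGi, norm_Tmap, ← incl_sub, norm_incl n (n+i) (Nat.le_add_right n i)]
          have hd : ‖x - c i‖ < r i := by rwa [mem_ball, dist_eq_norm] at hxi
          have hlt : ‖x - c i‖^2 + h^2 < 1 := by
            rw [hsq]; nlinarith [norm_nonneg (x - c i), hri.1]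
          calc Real.sqrt (‖x - c i‖^2 + h^2) < Real.sqrt 1 :=
                Real.sqrt_lt_sqrt (add_nonneg (sq_nonneg _) (sq_nonneg _)) hlt
            _ = 1 := Real.sqrt_one
        have hstep : stepReLU (Tmap n (c i) h i (Gmap n c r i x)) = 0 := by
          rw [stepReLU, if_neg (not_le.2 hnorm)]
        constructor
        · intro hall
          exact absurd hxi (hall i (Nat.lt_succ_self i))
        · intro j hj hxj hmin
          have hji : j = i := by
            rcases Nat.lt_succ_iff_lt_or_eq.1 hj with h' | h'
            · exact absurd hxj (hx j h')
            · exact h'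
          subst hji
          rw [hG, hstep, Smap_zero]
          rfl
      · have hx' : ∀ j < i+1, x ∉ Metric.ball (c j) (r j) := by
          intro j hj
          rcases Nat.lt_succ_iff_lt_or_eq.1 hj with h' | h'
          · exact hx j h'
          · subst h'; exact hxi
        have hnorm : 1 ≤ ‖Tmap n (c i) h i (Gmap n c r i x)‖ := by
          rw [hGi, norm_Tmap, ← incl_sub, norm_incl n (n+i) (Nat.le_add_right n i)]
          have hd : r i ≤ ‖x - c i‖ := by
            rw [← dist_eq_norm]
            exact le_of_not_gt (fun hlt => hxi (mem_ball.2 hlt))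
          have hge : 1 ≤ ‖x - c i‖^2 + h^2 := by
            rw [hsq]; nlinarith [hri.1]
          calc (1:ℝ) = Real.sqrt 1 := Real.sqrt_one.symm
            _ ≤ Real.sqrt (‖x - c i‖^2 + h^2) := Real.sqrt_le_sqrt hge
        have hstep : stepReLU (Tmap n (c i) h i (Gmap n c r i x))
            = Tmap n (c i) h i (Gmap n c r i x) := by
          rw [stepReLU, if_pos hnorm]
        constructor
        · intro _
          rw [hG, hstep, Smap_Tmap n (c i) h hpos.ne' i, hGi,
            incl_incl n (n+i) (n+i+1) (Nat.le_add_right n i)]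
          rfl
        · intro j hj hxj _
          exact absurd hxj (hx' j hj)
    · push_neg at hx
      obtain ⟨j0, hj0i, hj0x⟩ := hx
      have hex : ∃ j, x ∈ Metric.ball (c j) (r j) := ⟨j0, hj0x⟩
      set j := Nat.find hex with hjdef
      have hxj : x ∈ Metric.ball (c j) (r j) := Nat.find_spec hex
      have hjmin : ∀ k < j, x ∉ Metric.ball (c k) (r k) := fun k hk => Nat.find_min hex hk
      have hji : j < i := lt_of_le_of_lt (Nat.find_le hj0x) hj0i
      have hGi := (ih hiN' x).2 j hji hxj hjmin
      set p : Fin (n+i) := ⟨n+j, Nat.add_lt_add_left hji n⟩ with hpdef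
      have hcoord : |((Gmap n c r i x) - incl n (n+i) (c i)) p| = 1 := by
        rw [hGi]
        simp only [PiLp.sub_apply, PiLp.add_apply, EuclideanSpace.single_apply, incl, PiLp.toLp_apply]
        rw [dif_neg (by simp [hpdef]), dif_neg (by simp [hpdef])]
        simp
      have hnorm : 1 ≤ ‖Tmap n (c i) h i (Gmap n c r i x)‖ := by
        rw [norm_Tmap]
        have h1 : 1 ≤ ‖Gmap n c r i x - incl n (n+i) (c i)‖ :=
          hcoord ▸ coord_le_norm _ p
        have hge : 1 ≤ ‖Gmap n c r i x - incl n (n+i) (c i)‖^2 + h^2 := by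
          nlinarith [sq_nonneg h]
        calc (1:ℝ) = Real.sqrt 1 := Real.sqrt_one.symm
          _ ≤ _ := Real.sqrt_le_sqrt hge
      have hstep : stepReLU (Tmap n (c i) h i (Gmap n c r i x))
          = Tmap n (c i) h i (Gmap n c r i x) := by
        rw [stepReLU, if_pos hnorm]
      have hfinal : Gmap n c r (i+1) x
          = incl n (n+i+1) (c j)
            + EuclideanSpace.single (⟨n+j, Nat.add_lt_add_left (Nat.lt_succ_of_lt hji) n⟩ : Fin (n+i+1)) (1:ℝ) := by
        rw [hG, hstep, Smap_Tmap n (c i) h hpos.ne' i, hGi, incl_add,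
          incl_incl n (n+i) (n+i+1) (Nat.le_add_right n i),
          incl_single (n+i) (n+i+1) (Nat.le_succ _) p 1]
      constructor
      · intro hall
        exact absurd hxj (hall j (Nat.lt_succ_of_lt hji))
      · intro j' hj' hxj' hmin'
        have hjj : j' = j := by
          rcases lt_trichotomy j' j with h' | h' | h'
          · exact absurd hxj' (hjmin j' h')
          · exact h'
          · exact absurd hxj (hmin' j h')
        subst hjj
        exact hfinal


end
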